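/- Adding quantization noise reduces the achievable SIC sum-rate: for any L×L Hermitian PSD matrix S, σ² > 0, and diagonal PSD matrices Ψ₁ ⪯ Ψ₂ (entrywise on the diagonal), log det(S + Ψ₂ + σ²I) − log det(Ψ₂ + σ²I) ≤ log det(S + Ψ₁ + σ²I) − log det(Ψ₁ + σ²I). -/

import Mathlib

open Matrix ComplexOrder

variable {L : ℕ}

lemma inv_dot_le (D S : Matrix (Fin L) (Fin L) ℂ) (hD : D.PosDef) (hS : S.PosSemidef)
    (x : Fin L → ℂ) :
    star x ⬝ᵥ (D + S)⁻¹ *ᵥ x ≤ star x ⬝ᵥ D⁻¹ *ᵥ x := by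
  set M := D + S with hMdef
  have hM : M.PosDef := hD.add_posSemidef hS
  have hMH : Mᴴ = M := hM.isHermitian
  have hSH : Sᴴ = S := hS.isHermitian
  have hMinv : M * M⁻¹ = 1 := Matrix.mul_nonsing_inv _ hM.det_pos.ne'.isUnit
  have hDinv : D * D⁻¹ = 1 := Matrix.mul_nonsing_inv _ hD.det_pos.ne'.isUnit
  have hDinv' : D⁻¹ * D = 1 := Matrix.nonsing_inv_mul _ hD.det_pos.ne'.isUnit
  set u := M⁻¹ *ᵥ x with hu
  have hxu : M *ᵥ u = x := by
    rw [hu, mulVec_mulVec, hMinv, one_mulVec]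
  have key : M * D⁻¹ * M = M + (S + S * D⁻¹ * S) := by
    rw [hMdef, add_mul, hDinv, add_mul, one_mul, mul_add, mul_assoc S D⁻¹ D, hDinv', mul_one]
  have hpsd : (S + S * D⁻¹ * S).PosSemidef := by
    have h2 : (S * D⁻¹ * S).PosSemidef := by
      have := (hD.inv.posSemidef).conjTranspose_mul_mul_same S
      rwa [hSH] at this
    exact hS.add h2
  have h1 : star x ⬝ᵥ M⁻¹ *ᵥ x = star u ⬝ᵥ M *ᵥ u := by
    conv_lhs => rw [← hxu]
    rw [star_mulVec, hMH, ← dotProduct_mulVec, mulVec_mulVec, hMinv, one_mulVec]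
  have h2 : star x ⬝ᵥ D⁻¹ *ᵥ x = star u ⬝ᵥ (M * D⁻¹ * M) *ᵥ u := by
    conv_lhs => rw [← hxu]
    rw [star_mulVec, hMH, ← dotProduct_mulVec, mulVec_mulVec, mulVec_mulVec]
  rw [h1, h2, key]
  conv_rhs => rw [add_mulVec, dotProduct_add]
  exact le_add_of_nonneg_right (hpsd.dotProduct_mulVec_nonneg u)
lemma step_lem (S : Matrix (Fin L) (Fin L) ℂ) (hS : S.PosSemidef) (d : Fin L → ℝ)
    (hd : ∀ i, 0 < d i) (l : Fin L) (t : ℝ) (ht : 0 ≤ t) :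
    (S + diagonal (fun i => ((Function.update d l (d l + t) i : ℝ) : ℂ))).det.re * d l ≤
    (S + diagonal (fun i => ((d i : ℝ) : ℂ))).det.re * (d l + t) := by
  set D : Matrix (Fin L) (Fin L) ℂ := diagonal (fun i => ((d i : ℝ) : ℂ)) with hDdef
  have hD : D.PosDef := Matrix.PosDef.diagonal fun i => Complex.zero_lt_real.mpr (hd i)
  set M := S + D with hMdef
  have hM : M.PosDef := by rw [hMdef, add_comm S D]; exact hD.add_posSemidef hS
  have hMu : IsUnit M.det := hM.det_pos.ne'.isUnit
  have hDinv : D⁻¹ = diagonal (fun i => (((d i)⁻¹ : ℝ) : ℂ)) := by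
    apply Matrix.inv_eq_right_inv
    rw [hDdef, diagonal_mul_diagonal]
    convert Matrix.diagonal_one with i
    rw [← Complex.ofReal_mul, mul_inv_cancel₀ (hd i).ne']
    simp
  -- rank one update
  have heq : S + diagonal (fun i => ((Function.update d l (d l + t) i : ℝ) : ℂ)) =
      M + replicateCol Unit (Pi.single l (t : ℂ)) * replicateRow Unit (Pi.single l (1 : ℂ)) := by
    rw [hMdef, hDdef, add_assoc]
    congr 1
    ext i j
    simp only [Matrix.add_apply, Matrix.mul_apply, Matrix.replicateCol_apply, Matrix.replicateRow_apply,
      Matrix.diagonal_apply, Pi.single_apply, Function.update_apply, Finset.sum_const,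
      Finset.card_univ, Fintype.card_unit, one_smul]
    split_ifs with h1 h2 h3 <;> push_cast <;> simp_all <;> ring
  set c : ℂ := M⁻¹ l l with hc
  have hdet : (S + diagonal (fun i => ((Function.update d l (d l + t) i : ℝ) : ℂ))).det
      = M.det * (1 + t * c) := by
    rw [heq, det_add_replicateCol_mul_replicateRow hMu]
    congr 1
    rw [det_unique]
    simp [Matrix.add_apply, Matrix.mul_apply, Matrix.replicateRow_apply, Matrix.replicateCol_apply,
      Pi.single_apply, mul_comm, hc]
  -- c is in [0, (d l)⁻¹]
  have hc0 : (0 : ℂ) ≤ c := by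
    have h := hM.inv.posSemidef.dotProduct_mulVec_nonneg (Pi.single l 1)
    simpa [hc, mulVec_single, Pi.single_apply, dotProduct] using h
  have hcle : c ≤ (((d l)⁻¹ : ℝ) : ℂ) := by
    have h := inv_dot_le D S hD hS (Pi.single l 1)
    rw [add_comm D S, ← hMdef] at h
    have h2 : star (Pi.single l (1:ℂ)) ⬝ᵥ M⁻¹ *ᵥ Pi.single l 1 = c := by
      simp [hc, mulVec_single, Pi.single_apply, dotProduct]
    have h3 : star (Pi.single l (1:ℂ)) ⬝ᵥ D⁻¹ *ᵥ Pi.single l 1 = (((d l)⁻¹ : ℝ) : ℂ) := by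
      rw [hDinv]
      simp [mulVec_single, Pi.single_apply, dotProduct]
    rwa [h2, h3] at h
  have hc0re : 0 ≤ c.re := by rw [Complex.le_def] at hc0; simpa using hc0.1
  have hcim : c.im = 0 := by rw [Complex.le_def] at hc0; simpa using hc0.2.symm
  have hcle' : c.re ≤ (d l)⁻¹ := by
    have := (Complex.le_def.mp hcle).1; simpa using this
  have hdre : 0 < M.det.re := by
    have := (Complex.lt_def.mp hM.det_pos).1; simpa using this
  have hdim : M.det.im = 0 := by
    have := (Complex.lt_def.mp hM.det_pos).2; simpa using this.symm
  have hre : (S + diagonal (fun i => ((Function.update d l (d l + t) i : ℝ) : ℂ))).det.re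
      = M.det.re * (1 + t * c.re) := by
    rw [hdet, Complex.mul_re]
    simp [Complex.add_re, Complex.mul_re, Complex.mul_im, hcim, hdim]
  rw [hre]
  have hkey : c.re * d l ≤ 1 := by
    calc c.re * d l ≤ (d l)⁻¹ * d l := mul_le_mul_of_nonneg_right hcle' (hd l).le
      _ = 1 := inv_mul_cancel₀ (hd l).ne'
  have h4 : (1 + t * c.re) * d l ≤ d l + t := by
    nlinarith [mul_le_mul_of_nonneg_left hkey ht]
  calc M.det.re * (1 + t * c.re) * d l = M.det.re * ((1 + t * c.re) * d l) := by ring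
    _ ≤ M.det.re * (d l + t) := mul_le_mul_of_nonneg_left h4 hdre.le
lemma det_re_pos (S : Matrix (Fin L) (Fin L) ℂ) (hS : S.PosSemidef) (d : Fin L → ℝ)
    (hd : ∀ i, 0 < d i) : 0 < (S + diagonal (fun i => ((d i : ℝ) : ℂ))).det.re := by
  have hD : (diagonal (fun i => ((d i : ℝ) : ℂ))).PosDef :=
    Matrix.PosDef.diagonal fun i => Complex.zero_lt_real.mpr (hd i)
  have hM : (S + diagonal (fun i => ((d i : ℝ) : ℂ))).PosDef := by
    rw [add_comm]; exact hD.add_posSemidef hS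
  have := (Complex.lt_def.mp hM.det_pos).1
  simpa using this

lemma main_lem (S : Matrix (Fin L) (Fin L) ℂ) (hS : S.PosSemidef) (d : Fin L → ℝ)
    (hd : ∀ i, 0 < d i) (s : Finset (Fin L)) :
    ∀ (e : Fin L → ℝ), (∀ i, d i ≤ e i) → (∀ i ∉ s, d i = e i) →
    (S + diagonal (fun i => ((e i : ℝ) : ℂ))).det.re * ∏ i, d i ≤
    (S + diagonal (fun i => ((d i : ℝ) : ℂ))).det.re * ∏ i, e i := by
  induction s using Finset.induction_on with
  | empty =>
    intro e hde h
    have : d = e := funext fun i => h i (Finset.notMem_empty i)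
    subst this
    exact le_refl _
  | @insert l s hl ih =>
    intro e hde h
    set m : Fin L → ℝ := Function.update e l (d l) with hmdef
    have hml : m l = d l := Function.update_self l (d l) e
    have hmne : ∀ i, i ≠ l → m i = e i := fun i hi => Function.update_of_ne hi _ _
    have hdm : ∀ i, d i ≤ m i := by
      intro i
      rcases eq_or_ne i l with rfl | hi
      · rw [hml]
      · rw [hmne i hi]; exact hde i
    have hm_pos : ∀ i, 0 < m i := fun i => lt_of_lt_of_le (hd i) (hdm i)
    have hms : ∀ i ∉ s, d i = m i := by
      intro i hi
      rcases eq_or_ne i l with rfl | hne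
      · rw [hml]
      · rw [hmne i hne]
        exact h i (by simp [hne, hi])
    have IH := ih m hdm hms
    set t : ℝ := e l - d l with htdef
    have ht : 0 ≤ t := by have := hde l; rw [htdef]; linarith
    have step := step_lem S hS m hm_pos l t ht
    have hupd : Function.update m l (m l + t) = e := by
      funext i
      rcases eq_or_ne i l with rfl | hi
      · rw [Function.update_self, hml, htdef]; ring
      · rw [Function.update_of_ne hi, hmne i hi]
    rw [hupd, hml] at step
    have hmlt : d l + t = e l := by rw [htdef]; ring
    rw [hmlt] at step
    -- products
    have hQ : (0:ℝ) < ∏ i ∈ Finset.univ.erase l, e i :=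
      Finset.prod_pos fun i _ => lt_of_lt_of_le (hd i) (hde i)
    have hPe : ∏ i, e i = e l * ∏ i ∈ Finset.univ.erase l, e i :=
      (Finset.mul_prod_erase Finset.univ e (Finset.mem_univ l)).symm
    have hPm : ∏ i, m i = d l * ∏ i ∈ Finset.univ.erase l, e i := by
      rw [← Finset.mul_prod_erase Finset.univ m (Finset.mem_univ l), hml]
      congr 1
      exact Finset.prod_congr rfl fun i hi => hmne i (Finset.ne_of_mem_erase hi)
    have hPd : (0:ℝ) < ∏ i, d i := Finset.prod_pos fun i _ => hd i
    have hel : (0:ℝ) < e l := lt_of_lt_of_le (hd l) (hde l)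
    refine le_of_mul_le_mul_right ?_ (hd l)
    calc (S + diagonal (fun i => ((e i : ℝ) : ℂ))).det.re * (∏ i, d i) * d l
        = ((S + diagonal (fun i => ((e i : ℝ) : ℂ))).det.re * d l) * ∏ i, d i := by ring
      _ ≤ ((S + diagonal (fun i => ((m i : ℝ) : ℂ))).det.re * e l) * ∏ i, d i :=
          mul_le_mul_of_nonneg_right step hPd.le
      _ = ((S + diagonal (fun i => ((m i : ℝ) : ℂ))).det.re * ∏ i, d i) * e l := by ring
      _ ≤ ((S + diagonal (fun i => ((d i : ℝ) : ℂ))).det.re * ∏ i, m i) * e l :=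
          mul_le_mul_of_nonneg_right IH hel.le
      _ = (S + diagonal (fun i => ((d i : ℝ) : ℂ))).det.re * (∏ i, e i) * d l := by
          rw [hPm, hPe]; ring

/-- Adding quantization noise reduces the achievable SIC sum-rate:
if `0 ≤ Ψ₁ ≤ Ψ₂` (diagonal, entrywise), then
`log det(S + Ψ₂ + σ²I) − log det(Ψ₂ + σ²I) ≤ log det(S + Ψ₁ + σ²I) − log det(Ψ₁ + σ²I)`. -/
theorem stmt12 (L : ℕ) (S : Matrix (Fin L) (Fin L) ℂ) (hS : S.PosSemidef)
    (σ2 : ℝ) (hσ : 0 < σ2) (ψ1 ψ2 : Fin L → ℝ)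
    (h1 : ∀ l, 0 ≤ ψ1 l) (h12 : ∀ l, ψ1 l ≤ ψ2 l) :
    Real.log (S + diagonal (fun i => ((ψ2 i : ℝ) : ℂ)) +
        (σ2 : ℂ) • (1 : Matrix (Fin L) (Fin L) ℂ)).det.re -
      Real.log (diagonal (fun i => ((ψ2 i : ℝ) : ℂ)) +
        (σ2 : ℂ) • (1 : Matrix (Fin L) (Fin L) ℂ)).det.re ≤
    Real.log (S + diagonal (fun i => ((ψ1 i : ℝ) : ℂ)) +
        (σ2 : ℂ) • (1 : Matrix (Fin L) (Fin L) ℂ)).det.re -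
      Real.log (diagonal (fun i => ((ψ1 i : ℝ) : ℂ)) +
        (σ2 : ℂ) • (1 : Matrix (Fin L) (Fin L) ℂ)).det.re := by
  have hsmul : ∀ (ψ : Fin L → ℝ), diagonal (fun i => ((ψ i : ℝ) : ℂ)) +
      (σ2 : ℂ) • (1 : Matrix (Fin L) (Fin L) ℂ) =
      diagonal (fun i => ((ψ i + σ2 : ℝ) : ℂ)) := by
    intro ψ
    rw [← Matrix.diagonal_one, ← Matrix.diagonal_smul, Matrix.diagonal_add]
    congr 1
    funext i
    push_cast
    simp
  have hdiagdet : ∀ (ψ : Fin L → ℝ), (diagonal (fun i => ((ψ i + σ2 : ℝ) : ℂ))).det.re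
      = ∏ i, (ψ i + σ2) := by
    intro ψ
    rw [Matrix.det_diagonal]
    simp only [← Complex.ofReal_add, ← Complex.ofReal_prod, Complex.ofReal_re]
  set a : Fin L → ℝ := fun i => ψ1 i + σ2 with ha
  set b : Fin L → ℝ := fun i => ψ2 i + σ2 with hb
  have hapos : ∀ i, 0 < a i := fun i => by have := h1 i; rw [ha]; positivity
  have hab : ∀ i, a i ≤ b i := fun i => by have := h12 i; rw [ha, hb]; dsimp; linarith
  have hbpos : ∀ i, 0 < b i := fun i => lt_of_lt_of_le (hapos i) (hab i)
  have hXa : 0 < (S + diagonal (fun i => ((a i : ℝ) : ℂ))).det.re := det_re_pos S hS a hapos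
  have hXb : 0 < (S + diagonal (fun i => ((b i : ℝ) : ℂ))).det.re := det_re_pos S hS b hbpos
  have hYa : (0:ℝ) < ∏ i, a i := Finset.prod_pos fun i _ => hapos i
  have hYb : (0:ℝ) < ∏ i, b i := Finset.prod_pos fun i _ => hbpos i
  have hmain := main_lem S hS a hapos Finset.univ b hab (fun i hi => absurd (Finset.mem_univ i) hi)
  have hadd : ∀ (ψ : Fin L → ℝ), S + diagonal (fun i => ((ψ i : ℝ) : ℂ)) +
      (σ2 : ℂ) • (1 : Matrix (Fin L) (Fin L) ℂ) =
      S + diagonal (fun i => ((ψ i + σ2 : ℝ) : ℂ)) := by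
    intro ψ; rw [add_assoc, hsmul]
  rw [hadd ψ1, hadd ψ2, hsmul ψ1, hsmul ψ2, hdiagdet ψ1, hdiagdet ψ2]
  rw [sub_le_sub_iff]
  rw [← Real.log_mul hXb.ne' hYa.ne', ← Real.log_mul hXa.ne' hYb.ne']
  exact Real.log_le_log (by positivity) hmain
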